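/- Let U be a positively filtered R-algebra over a complete DVR R that is deformable (gr U is flat over R). For t ≥ 0, the intersection of the first deformation U₁ = Σ_{i≥0} π^i F_iU with π^t U equals Σ_{i≥t} π^i F_iU. -/

import Mathlib

section FilteredDeformable

variable {R U : Type*} [CommRing R] [Ring U] [Algebra R U]

/-- The image `r • N` of a submodule `N ⊆ U` under multiplication by the scalar `r ∈ R`. -/
noncomputable def smulSub (r : R) (N : Submodule R U) : Submodule R U :=
  Submodule.map (r • (LinearMap.id : U →ₗ[R] U)) N

/-- A positively filtered `R`-algebra structure on `U`: an exhaustive, increasing,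
multiplicative filtration `F₀U ⊆ F₁U ⊆ ⋯` with `1 ∈ F₀U`. -/
structure AlgebraFiltration (F : ℕ → Submodule R U) : Prop where
  mono : Monotone F
  one_mem : (1 : U) ∈ F 0
  mul_le : ∀ i j : ℕ, ∀ x ∈ F i, ∀ y ∈ F j, x * y ∈ F (i + j)
  exhaustive : ∀ u : U, ∃ i, u ∈ F i

/-- `F` shifted down one step, with `F₋₁ = ⊥`; used to express conditions on the associated
graded ring `gr U = ⊕ᵢ Fᵢ U / Fᵢ₋₁ U`. -/
noncomputable def Fpred (F : ℕ → Submodule R U) : ℕ → Submodule R U :=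
  fun i => if i = 0 then ⊥ else F (i - 1)

/-- `U` is deformable: the associated graded ring `gr U` is `π`-torsion-free
(equivalently, flat over the DVR `R`).  Concretely, for every `i` and `x ∈ Fᵢ U`, if
`π • x ∈ Fᵢ₋₁ U` then `x ∈ Fᵢ₋₁ U` (where `F₋₁ U = 0`). -/
def GrTorsionFree (π : R) (F : ℕ → Submodule R U) : Prop :=
  ∀ i : ℕ, ∀ x ∈ F i, π • x ∈ Fpred F i → x ∈ Fpred F i

/-- The associated graded ring `gr U` is commutative: commutators drop filtration degree. -/
def GrCommutative (F : ℕ → Submodule R U) : Prop :=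
  ∀ i j : ℕ, ∀ x ∈ F i, ∀ y ∈ F j, x * y - y * x ∈ Fpred F (i + j)

end FilteredDeformable

section Aux

variable {R U : Type*} [CommRing R] [Ring U] [Algebra R U]

lemma mem_smulSub {r : R} {N : Submodule R U} {x : U} :
    x ∈ smulSub r N ↔ ∃ y ∈ N, r • y = x := by
  simp [smulSub, Submodule.mem_map]

lemma smulSub_mem {r : R} {N : Submodule R U} {y : U} (hy : y ∈ N) :
    r • y ∈ smulSub r N := mem_smulSub.2 ⟨y, hy, rfl⟩

lemma tf_F (π : R) (F : ℕ → Submodule R U) (hdef : GrTorsionFree π F) :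
    ∀ i : ℕ, ∀ x ∈ F i, π • x = 0 → x = 0 := by
  intro i
  induction i with
  | zero =>
      intro x hx h0
      have : x ∈ Fpred F 0 := hdef 0 x hx (by simp [Fpred, h0])
      simpa [Fpred] using this
  | succ n ih =>
      intro x hx h0
      have : x ∈ Fpred F (n + 1) := hdef (n + 1) x hx (by simp [Fpred, h0])
      exact ih x (by simpa [Fpred] using this) h0

lemma tf_U (π : R) (F : ℕ → Submodule R U) (hF : AlgebraFiltration F)
    (hdef : GrTorsionFree π F) : ∀ x : U, π • x = 0 → x = 0 := by
  intro x h0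
  obtain ⟨i, hi⟩ := hF.exhaustive x
  exact tf_F π F hdef i x hi h0

lemma tf_U_pow (π : R) (F : ℕ → Submodule R U) (hF : AlgebraFiltration F)
    (hdef : GrTorsionFree π F) : ∀ t : ℕ, ∀ x : U, π ^ t • x = 0 → x = 0 := by
  intro t
  induction t with
  | zero => intro x h0; simpa using h0
  | succ n ih =>
      intro x h0
      have : π ^ n • (π • x) = 0 := by
        rw [← mul_smul, ← pow_succ]; exact h0
      exact tf_U π F hF hdef x (ih _ this)

lemma descend (π : R) (F : ℕ → Submodule R U) (hF : AlgebraFiltration F)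
    (hdef : GrTorsionFree π F) (i : ℕ) :
    ∀ j : ℕ, ∀ w ∈ F j, π • w ∈ F i → w ∈ F i := by
  intro j
  induction j with
  | zero => intro w hw _; exact hF.mono (Nat.zero_le i) hw
  | succ n ih =>
      intro w hw hπw
      by_cases h : n + 1 ≤ i
      · exact hF.mono h hw
      · have hin : i ≤ n := by omega
        have : π • w ∈ Fpred F (n + 1) := by
          simpa [Fpred] using hF.mono hin hπw
        have := hdef (n + 1) w hw this
        exact ih w (by simpa [Fpred] using this) hπw

lemma divF_mem (π : R) (F : ℕ → Submodule R U) (hF : AlgebraFiltration F)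
    (hdef : GrTorsionFree π F) (i : ℕ) (x : U) (hx : x ∈ F i)
    (hd : ∃ w : U, x = π • w) : ∃ w ∈ F i, x = π • w := by
  obtain ⟨w, rfl⟩ := hd
  obtain ⟨j, hj⟩ := hF.exhaustive w
  exact ⟨w, descend π F hF hdef i j w hj hx, rfl⟩

lemma S_succ (π : R) (F : ℕ → Submodule R U) (t : ℕ) :
    (⨆ i : ℕ, ⨆ _ : t ≤ i, smulSub (π ^ i) (F i)) =
      smulSub (π ^ t) (F t) ⊔ ⨆ i : ℕ, ⨆ _ : t + 1 ≤ i, smulSub (π ^ i) (F i) := by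
  apply le_antisymm
  · refine iSup₂_le fun i hi => ?_
    rcases eq_or_lt_of_le hi with h | h
    · subst h; exact le_sup_left
    · exact le_sup_of_le_right (le_iSup₂ (f := fun i (_ : t + 1 ≤ i) => smulSub (π ^ i) (F i)) i h)
  · refine sup_le (le_iSup₂ (f := fun i (_ : t ≤ i) => smulSub (π ^ i) (F i)) t le_rfl)
      (iSup₂_le fun i hi =>
        le_iSup₂ (f := fun i (_ : t ≤ i) => smulSub (π ^ i) (F i)) i (by omega))

lemma S_le_pi (π : R) (F : ℕ → Submodule R U) (t : ℕ) :
    (⨆ i : ℕ, ⨆ _ : t ≤ i, smulSub (π ^ i) (F i)) ≤ smulSub (π ^ t) (⊤ : Submodule R U) := by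
  refine iSup₂_le fun i hi => ?_
  intro x hx
  obtain ⟨y, -, rfl⟩ := mem_smulSub.1 hx
  refine mem_smulSub.2 ⟨π ^ (i - t) • y, trivial, ?_⟩
  rw [← mul_smul, ← pow_add, Nat.add_sub_cancel' hi]

lemma step_lemma (π : R) (F : ℕ → Submodule R U) (hF : AlgebraFiltration F)
    (hdef : GrTorsionFree π F) (t : ℕ) (u : U)
    (hu : u ∈ ⨆ i : ℕ, ⨆ _ : t ≤ i, smulSub (π ^ i) (F i))
    (hdiv : u ∈ smulSub (π ^ (t + 1)) (⊤ : Submodule R U)) :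
    u ∈ ⨆ i : ℕ, ⨆ _ : t + 1 ≤ i, smulSub (π ^ i) (F i) := by
  rw [S_succ] at hu
  obtain ⟨a, ha, w, hw, rfl⟩ := Submodule.mem_sup.1 hu
  obtain ⟨x, hx, rfl⟩ := mem_smulSub.1 ha
  obtain ⟨c, -, hc⟩ := mem_smulSub.1 hdiv
  obtain ⟨b, -, hb⟩ := mem_smulSub.1 (S_le_pi π F (t + 1) hw)
  -- π ^ t • x = π ^ (t+1) • (c - b)
  have hts : π ^ t • x = π ^ (t + 1) • (c - b) := by
    rw [smul_sub, hb, hc]; abel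
  have key : π ^ t • (x - π • (c - b)) = 0 := by
    rw [smul_sub, ← mul_smul, ← pow_succ, ← hts, sub_self]
  have hxd : x = π • (c - b) := by
    have := tf_U_pow π F hF hdef t _ key
    linear_combination (norm := abel) this
  obtain ⟨w', hw', hxw'⟩ := divF_mem π F hF hdef t x hx ⟨_, hxd⟩
  have : π ^ t • x = π ^ (t + 1) • w' := by
    rw [hxw', ← mul_smul, ← pow_succ]
  rw [this]
  have hmem : π ^ (t + 1) • w' ∈ smulSub (π ^ (t + 1)) (F (t + 1)) :=
    smulSub_mem (hF.mono (Nat.le_succ t) hw')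
  exact add_mem
    (le_iSup₂ (f := fun i (_ : t + 1 ≤ i) => smulSub (π ^ i) (F i)) (t + 1) le_rfl hmem) hw

end Aux

/-- Let `U` be a positively filtered algebra over a complete DVR `R`
(with nonzero nonunit `π`) which is deformable (`gr U` is `π`-torsion-free).  Then for any
`t ≥ 0`, the intersection of the first deformation `U₁ = Σ_{i≥0} πⁱ Fᵢ U` with `πᵗ U`
equals `Σ_{i≥t} πⁱ Fᵢ U`. -/
theorem first_deformation_inter_pi_pow
    {R U : Type*} [CommRing R] [IsDomain R] [IsDiscreteValuationRing R]
    (π : R) (hπ0 : π ≠ 0) (hπu : ¬IsUnit π)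
    [IsAdicComplete (Ideal.span {π}) R]
    [Ring U] [Algebra R U]
    (F : ℕ → Submodule R U) (hF : AlgebraFiltration F)
    (hdef : GrTorsionFree π F) (t : ℕ) :
    (⨆ i : ℕ, smulSub (π ^ i) (F i)) ⊓ smulSub (π ^ t) (⊤ : Submodule R U) =
      ⨆ i : ℕ, ⨆ _ : t ≤ i, smulSub (π ^ i) (F i) := by
  apply le_antisymm
  · rintro u ⟨h1, h2⟩
    have h0 : u ∈ ⨆ i : ℕ, ⨆ _ : 0 ≤ i, smulSub (π ^ i) (F i) := by
      simpa using h1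
    -- induct up to t
    have main : ∀ k : ℕ, k ≤ t → u ∈ ⨆ i : ℕ, ⨆ _ : k ≤ i, smulSub (π ^ i) (F i) := by
      intro k
      induction k with
      | zero => intro _; exact h0
      | succ n ih =>
          intro hnt
          have hun := ih (by omega)
          have hdivn : u ∈ smulSub (π ^ (n + 1)) (⊤ : Submodule R U) := by
            obtain ⟨c, -, rfl⟩ := mem_smulSub.1 h2
            refine mem_smulSub.2 ⟨π ^ (t - (n + 1)) • c, trivial, ?_⟩
            rw [← mul_smul, ← pow_add, Nat.add_sub_cancel' hnt]
          exact step_lemma π F hF hdef n u hun hdivn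
    exact main t le_rfl
  · refine le_inf (iSup₂_le fun i _ => le_iSup (fun i => smulSub (π ^ i) (F i)) i)
      (S_le_pi π F t)
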